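/- KL–variance bound for quantal responses. Let Q, Q̃ : B → ℝ with ν = ν_Q, ν̃ = ν_{Q̃}, and suppose B_A > 0 satisfies ‖A_Q‖_∞ ≤ B_A and ‖A_{Q̃}‖_∞ ≤ B_A. Then KL(ν ‖ ν̃) ≤ (η²·exp(2ηB_A)/2)·Var_ν[Q̃ − Q]. -/

import Mathlib

open Finset

noncomputable section

namespace QSE13

variable {B : Type*} [Fintype B]

/-- Soft value `V(Q) = η⁻¹ log Σ_b exp(η Q b)`. -/
def softVal (η : ℝ) (Q : B → ℝ) : ℝ := η⁻¹ * Real.log (∑ b, Real.exp (η * Q b))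

/-- Advantage `A_Q(b) = Q b − V(Q)`. -/
def adv (η : ℝ) (Q : B → ℝ) (b : B) : ℝ := Q b - softVal η Q

/-- Quantal response `ν_Q(b) = exp(η A_Q(b))`. -/
def qres (η : ℝ) (Q : B → ℝ) (b : B) : ℝ := Real.exp (η * adv η Q b)

/-- KL divergence `KL(p‖q) = Σ_b p(b) log(p(b)/q(b))`. -/
def klD (p q : B → ℝ) : ℝ := ∑ b, p b * Real.log (p b / q b)

/-- Expectation `E_p[f] = Σ_b p(b) f(b)`. -/
def expec (p f : B → ℝ) : ℝ := ∑ b, p b * f b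

/-- Variance `Var_p[f] = E_p[(f − E_p[f])²]`. -/
def varD (p f : B → ℝ) : ℝ := ∑ b, p b * (f b - expec p f) ^ 2

/-! ### Auxiliary analytic lemmas -/

lemma exp_quad_le {y : ℝ} (hy : y ≤ 0) : Real.exp y ≤ 1 + y + y ^ 2 / 2 := by
  have key : MonotoneOn (fun x : ℝ => Real.exp x - (1 + x + x ^ 2 / 2)) (Set.Iic 0) := by
    apply monotoneOn_of_deriv_nonneg (convex_Iic 0)
    · apply Continuous.continuousOn; continuity
    · intro x hx
      apply DifferentiableAt.differentiableWithinAt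
      fun_prop
    · intro x hx
      have h : HasDerivAt (fun x : ℝ => Real.exp x - (1 + x + x ^ 2 / 2))
          (Real.exp x - (0 + 1 + (2 * x ^ 1) / 2)) x := by
        exact (Real.hasDerivAt_exp x).sub
          (((hasDerivAt_const x (1:ℝ)).add (hasDerivAt_id x)).add
            ((hasDerivAt_pow 2 x).div_const 2))
      rw [h.deriv]
      have := Real.add_one_le_exp x
      simp only [pow_one]
      linarith
  have h2 := key (Set.mem_Iic.mpr hy) (Set.mem_Iic.mpr le_rfl) hy
  simp only [Real.exp_zero] at h2
  nlinarith [h2]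

lemma exp_sub_one_sub_le (y : ℝ) : Real.exp y - 1 - y ≤ y ^ 2 / 2 * Real.exp |y| := by
  rcases le_or_gt y 0 with hy | hy
  · have h1 := exp_quad_le hy
    have h2 : (1:ℝ) ≤ Real.exp |y| := Real.one_le_exp (abs_nonneg y)
    nlinarith [sq_nonneg y]
  · rw [abs_of_pos hy]
    have key : MonotoneOn
        (fun x : ℝ => x ^ 2 / 2 * Real.exp x - Real.exp x + 1 + x) (Set.Ici 0) := by
      apply monotoneOn_of_deriv_nonneg (convex_Ici 0)
      · apply Continuous.continuousOn; continuity
      · intro x hx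
        apply DifferentiableAt.differentiableWithinAt
        fun_prop
      · intro x hx
        have h : HasDerivAt (fun x : ℝ => x ^ 2 / 2 * Real.exp x - Real.exp x + 1 + x)
            ((2 * x ^ 1 / 2 * Real.exp x + x ^ 2 / 2 * Real.exp x - Real.exp x + 0) + 1) x := by
          exact (((((hasDerivAt_pow 2 x).div_const 2).mul (Real.hasDerivAt_exp x)).sub
            (Real.hasDerivAt_exp x)).add (hasDerivAt_const x (1:ℝ))).add (hasDerivAt_id x)
        rw [h.deriv]
        have hx0 : (0:ℝ) ≤ x := le_of_lt (by simpa using hx)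
        have h1 : -x + 1 ≤ Real.exp (-x) := Real.add_one_le_exp (-x)
        have h2 : Real.exp x * Real.exp (-x) = 1 := by
          rw [← Real.exp_add]; simp
        have h3 : (0:ℝ) < Real.exp x := Real.exp_pos x
        simp only [pow_one]
        nlinarith [mul_le_mul_of_nonneg_left h1 h3.le, sq_nonneg x]
    have h2 := key (Set.mem_Ici.mpr le_rfl) (Set.mem_Ici.mpr hy.le) hy.le
    simp only [Real.exp_zero] at h2
    nlinarith [h2]

/-! ### Basic facts about quantal responses -/

lemma exp_eta_softVal [Nonempty B] {η : ℝ} (hη : 0 < η) (Q : B → ℝ) :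
    Real.exp (η * softVal η Q) = ∑ b, Real.exp (η * Q b) := by
  have hS : 0 < ∑ b, Real.exp (η * Q b) :=
    Finset.sum_pos (fun b _ => Real.exp_pos _) Finset.univ_nonempty
  rw [softVal, ← mul_assoc, mul_inv_cancel₀ hη.ne', one_mul, Real.exp_log hS]

lemma qres_eq [Nonempty B] {η : ℝ} (hη : 0 < η) (Q : B → ℝ) (b : B) :
    qres η Q b = Real.exp (η * Q b) / ∑ b', Real.exp (η * Q b') := by
  rw [qres, adv, mul_sub, Real.exp_sub, exp_eta_softVal hη]

lemma sum_qres [Nonempty B] {η : ℝ} (hη : 0 < η) (Q : B → ℝ) :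
    ∑ b, qres η Q b = 1 := by
  have hS : 0 < ∑ b, Real.exp (η * Q b) :=
    Finset.sum_pos (fun b _ => Real.exp_pos _) Finset.univ_nonempty
  simp only [qres_eq hη]
  rw [← Finset.sum_div, div_self hS.ne']

lemma adv_nonpos [Nonempty B] {η : ℝ} (hη : 0 < η) (Q : B → ℝ) (b : B) :
    adv η Q b ≤ 0 := by
  have h : Real.exp (η * Q b) ≤ Real.exp (η * softVal η Q) := by
    rw [exp_eta_softVal hη]
    exact Finset.single_le_sum (f := fun b => Real.exp (η * Q b))
      (fun b _ => (Real.exp_pos _).le) (Finset.mem_univ b)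
  have h2 : η * Q b ≤ η * softVal η Q := Real.exp_le_exp.mp h
  have h3 : Q b ≤ softVal η Q := (mul_le_mul_iff_right₀ hη).mp h2
  rw [adv]; linarith

/-- KL–variance bound for quantal responses:
`KL(ν ‖ ν̃) ≤ (η² exp(2ηB_A)/2)·Var_ν[Q̃ − Q]` where `ν = ν_Q`, `ν̃ = ν_{Q̃}`. -/
theorem kl_variance_bound_quantal
    {B : Type*} [Fintype B] [Nonempty B]
    (η : ℝ) (hη : 0 < η) (Q Qt : B → ℝ) (BA : ℝ) (hBA : 0 < BA)
    (hA : ∀ b, |adv η Q b| ≤ BA) (hAt : ∀ b, |adv η Qt b| ≤ BA) :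
    klD (qres η Q) (qres η Qt) ≤
      η ^ 2 * Real.exp (2 * η * BA) / 2 * varD (qres η Q) (fun b => Qt b - Q b) := by
  classical
  set V := softVal η Q with hV
  set Vt := softVal η Qt with hVt
  set μ := expec (qres η Q) (fun b => Qt b - Q b) with hμ
  have hνpos : ∀ b, 0 < qres η Q b := fun b => Real.exp_pos _
  have hνsum : ∑ b, qres η Q b = 1 := sum_qres hη Q
  -- Step 1: klD = η (Vt - V) - η μ
  have hkl : klD (qres η Q) (qres η Qt) = η * (Vt - V) - η * μ := by
    rw [klD]
    calc ∑ b, qres η Q b * Real.log (qres η Q b / qres η Qt b)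
        = ∑ b, (qres η Q b * (η * (Vt - V)) - η * (qres η Q b * (Qt b - Q b))) := by
          apply Finset.sum_congr rfl; intro b _
          rw [qres, qres, ← Real.exp_sub, Real.log_exp, adv, adv, ← hV, ← hVt]
          ring
      _ = (∑ b, qres η Q b) * (η * (Vt - V)) - η * ∑ b, qres η Q b * (Qt b - Q b) := by
          rw [Finset.sum_sub_distrib, ← Finset.sum_mul, ← Finset.mul_sum]
      _ = η * (Vt - V) - η * μ := by rw [hνsum, one_mul, hμ, expec]
  -- Step 2: E_ν[exp(η X)] = exp(η(Vt - V) - η μ)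
  have hE : ∑ b, qres η Q b * Real.exp (η * ((Qt b - Q b) - μ))
      = Real.exp (η * (Vt - V) - η * μ) := by
    have h1 : ∀ b, qres η Q b * Real.exp (η * ((Qt b - Q b) - μ))
        = Real.exp (η * Qt b) / (∑ b', Real.exp (η * Q b')) * Real.exp (-(η * μ)) := by
      intro b
      rw [qres_eq hη, div_mul_eq_mul_div, ← Real.exp_add,
        show η * Q b + η * ((Qt b - Q b) - μ) = η * Qt b + -(η * μ) by ring, Real.exp_add]
      ring
    rw [Finset.sum_congr rfl (fun b _ => h1 b), ← Finset.sum_mul, ← Finset.sum_div,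
      ← exp_eta_softVal hη Qt, ← exp_eta_softVal hη Q, ← Real.exp_sub, ← Real.exp_add, ← hV, ← hVt]
    congr 1
    ring
  -- Step 3: ∑ ν X = 0
  have hX0 : ∑ b, qres η Q b * ((Qt b - Q b) - μ) = 0 := by
    have h1 : ∑ b, qres η Q b * ((Qt b - Q b) - μ)
        = (∑ b, qres η Q b * (Qt b - Q b)) - (∑ b, qres η Q b) * μ := by
      simp only [mul_sub]
      rw [Finset.sum_sub_distrib, ← Finset.sum_mul]
    rw [h1, hνsum, one_mul, hμ, expec]
    exact sub_self _
  -- Step 4: KL ≤ ∑ ν (exp(ηX) - 1 - ηX)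
  have key : klD (qres η Q) (qres η Qt)
      ≤ ∑ b, qres η Q b *
          (Real.exp (η * ((Qt b - Q b) - μ)) - 1 - η * ((Qt b - Q b) - μ)) := by
    have hsplit : ∑ b, qres η Q b *
          (Real.exp (η * ((Qt b - Q b) - μ)) - 1 - η * ((Qt b - Q b) - μ))
        = (∑ b, qres η Q b * Real.exp (η * ((Qt b - Q b) - μ))) - (∑ b, qres η Q b)
          - η * ∑ b, qres η Q b * ((Qt b - Q b) - μ) := by
      rw [Finset.mul_sum, ← Finset.sum_sub_distrib, ← Finset.sum_sub_distrib]
      apply Finset.sum_congr rfl; intros; ring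
    rw [hsplit, hE, hνsum, hX0, mul_zero, sub_zero, hkl]
    linarith [Real.add_one_le_exp (η * (Vt - V) - η * μ)]
  -- Step 5: |X b| ≤ 2 BA
  have hμ_eq : μ = (∑ b, qres η Q b * adv η Qt b) - (∑ b, qres η Q b * adv η Q b) + (Vt - V) := by
    rw [hμ, expec]
    have h1 : ∀ b, qres η Q b * (Qt b - Q b)
        = (qres η Q b * adv η Qt b - qres η Q b * adv η Q b) + qres η Q b * (Vt - V) := by
      intro b; rw [adv, adv, ← hV, ← hVt]; ring
    rw [Finset.sum_congr rfl (fun b _ => h1 b), Finset.sum_add_distrib,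
      Finset.sum_sub_distrib, ← Finset.sum_mul, hνsum, one_mul]
  have hbnd : ∀ (R : B → ℝ), (∀ b, |adv η R b| ≤ BA) →
      (-BA ≤ ∑ b, qres η Q b * adv η R b ∧ (∑ b, qres η Q b * adv η R b) ≤ 0) := by
    intro R hR
    constructor
    · have h1 : ∑ b, qres η Q b * (-BA) ≤ ∑ b, qres η Q b * adv η R b := by
        apply Finset.sum_le_sum
        intro b _
        exact mul_le_mul_of_nonneg_left ((abs_le.mp (hR b)).1) (hνpos b).le
      rw [← Finset.sum_mul, hνsum, one_mul] at h1
      exact h1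
    · apply Finset.sum_nonpos
      intro b _
      exact mul_nonpos_of_nonneg_of_nonpos (hνpos b).le (adv_nonpos hη R b)
  have hXbound : ∀ b, |(Qt b - Q b) - μ| ≤ 2 * BA := by
    intro b
    have h1 : Qt b - Q b = adv η Qt b - adv η Q b + (Vt - V) := by
      rw [adv, adv, ← hV, ← hVt]; ring
    obtain ⟨hm1, hm2⟩ := hbnd Q hA
    obtain ⟨hm3, hm4⟩ := hbnd Qt hAt
    have ha1 := (abs_le.mp (hA b)).1
    have ha2 := adv_nonpos hη Q b
    have ha3 := (abs_le.mp (hAt b)).1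
    have ha4 := adv_nonpos hη Qt b
    rw [abs_le]
    constructor <;> [skip; skip] <;>
      · rw [h1, hμ_eq]; linarith
  -- Final chain
  calc klD (qres η Q) (qres η Qt)
      ≤ ∑ b, qres η Q b *
          (Real.exp (η * ((Qt b - Q b) - μ)) - 1 - η * ((Qt b - Q b) - μ)) := key
    _ ≤ ∑ b, qres η Q b *
          (η ^ 2 * Real.exp (2 * η * BA) / 2 * ((Qt b - Q b) - μ) ^ 2) := by
        apply Finset.sum_le_sum
        intro b _
        apply mul_le_mul_of_nonneg_left _ (hνpos b).le
        have h1 := exp_sub_one_sub_le (η * ((Qt b - Q b) - μ))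
        have h2 : |η * ((Qt b - Q b) - μ)| ≤ 2 * η * BA := by
          rw [abs_mul, abs_of_pos hη]
          have := hXbound b
          nlinarith
        have h3 : Real.exp |η * ((Qt b - Q b) - μ)| ≤ Real.exp (2 * η * BA) :=
          Real.exp_le_exp.mpr h2
        have h4 : (0:ℝ) ≤ (η * ((Qt b - Q b) - μ)) ^ 2 / 2 := by positivity
        calc Real.exp (η * ((Qt b - Q b) - μ)) - 1 - η * ((Qt b - Q b) - μ)
            ≤ (η * ((Qt b - Q b) - μ)) ^ 2 / 2 * Real.exp |η * ((Qt b - Q b) - μ)| := h1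
          _ ≤ (η * ((Qt b - Q b) - μ)) ^ 2 / 2 * Real.exp (2 * η * BA) :=
              mul_le_mul_of_nonneg_left h3 h4
          _ = η ^ 2 * Real.exp (2 * η * BA) / 2 * ((Qt b - Q b) - μ) ^ 2 := by ring
    _ = η ^ 2 * Real.exp (2 * η * BA) / 2 * varD (qres η Q) (fun b => Qt b - Q b) := by
        rw [varD, Finset.mul_sum, ← hμ]
        apply Finset.sum_congr rfl
        intros
        ring

end QSE13
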